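/- Let α be an irrational number and let q be a positive integer such that ‖qα‖ ≤ C q^{−γ} for some constants γ ≥ 1 and C > 0. Set K(q) = ⌊q^γ/(3C)⌋. Then every Borel probability measure ν on 𝕋 whose support is contained in the finite set { {jα} : j ∈ ℤ, |j| ≤ K(q) } satisfies W₁(ν, μ) ≥ 1/(36q). -/

import Mathlib

open MeasureTheory ProbabilityTheory Filter Finset Real
open scoped ENNReal

noncomputable section

/-- Distance from a real number `x` to the nearest integer: the norm of its image
on the torus `𝕋 = ℝ/ℤ`. -/
def torusNorm (x : ℝ) : ℝ := ‖(x : UnitAddCircle)‖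

/-- The set of couplings of two Borel measures on the torus. -/
def couplings (ν₀ ν₁ : Measure UnitAddCircle) : Set (Measure (UnitAddCircle × UnitAddCircle)) :=
  {γ | γ.map Prod.fst = ν₀ ∧ γ.map Prod.snd = ν₁}

/-- The `L^p`-Wasserstein distance between two Borel measures on the torus. -/
def wassersteinDist (p : ℝ) (ν₀ ν₁ : Measure UnitAddCircle) : ℝ :=
  sInf ((fun γ => (∫ z, dist z.1 z.2 ^ p ∂γ) ^ (1 / p)) '' couplings ν₀ ν₁)

/-- The empirical measure `μ_n = (1/n) ∑_{j=1}^n δ_{{S_j α}}` on the torus,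
for a given path `S : ℕ → ℤ` of the random walk. -/
def empiricalMeasure (α : ℝ) (S : ℕ → ℤ) (n : ℕ) : Measure UnitAddCircle :=
  (n : ℝ≥0∞)⁻¹ • ∑ j ∈ Finset.range n, Measure.dirac (((S (j + 1) : ℝ) * α : ℝ) : UnitAddCircle)

/-- The expected `L^p`-Wasserstein distance `E[W_p(μ_n, μ)]` between the empirical measure
of the random walk `S_j = X_1 + ⋯ + X_j` (mod 1, rotated by `α`) and the uniform
distribution `μ` on the torus. -/
def expWassersteinEmp {Ω : Type*} [MeasurableSpace Ω] (P : Measure Ω) (X : ℕ → Ω → ℤ)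
    (α : ℝ) (p : ℝ) (n : ℕ) : ℝ :=
  ∫ ω, wassersteinDist p (empiricalMeasure α (fun j => ∑ i ∈ Finset.range j, X i ω) n) volume ∂P

section Helpers
open Metric Set


lemma my_abs_sub_round_le_abs (x : ℝ) : |x - round x| ≤ |x| := by
  rcases le_or_gt (1/2) |x| with h | h
  · exact (abs_sub_round x).trans h
  · have : round x = 0 := by
      rw [round_eq_zero_iff]
      constructor
      · linarith [abs_lt.mp h |>.1]
      · linarith [abs_lt.mp h |>.2]
    simp [this]

lemma norm_coe_le (x : ℝ) : ‖(x : UnitAddCircle)‖ ≤ |x| := by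
  rw [UnitAddCircle.norm_eq]; exact my_abs_sub_round_le_abs x

lemma dist_coe_le (x y : ℝ) : dist ((x : ℝ) : UnitAddCircle) ((y : ℝ) : UnitAddCircle) ≤ |x - y| := by
  rw [dist_eq_norm]
  rw [← AddCircle.coe_sub]; exact norm_coe_le _

lemma norm_le_half (z : UnitAddCircle) : ‖z‖ ≤ 1/2 := by
  induction z using QuotientAddGroup.induction_on with
  | H x => rw [UnitAddCircle.norm_eq]; exact abs_sub_round x

lemma dist_le_half (a b : UnitAddCircle) : dist a b ≤ 1/2 := by
  rw [dist_eq_norm]; exact norm_le_half _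

lemma coe_add_int (x : ℝ) (n : ℤ) : ((x + n : ℝ) : UnitAddCircle) = ((x : ℝ) : UnitAddCircle) := by
  have : ((n : ℝ) : UnitAddCircle) = 0 := by
    rw [AddCircle.coe_eq_zero_iff]
    exact ⟨n, by simp⟩
  rw [AddCircle.coe_add, this, add_zero]

lemma vol_closedBall_le (x : UnitAddCircle) (ε : ℝ) :
    volume (closedBall x ε) ≤ ENNReal.ofReal (2 * ε) := by
  rw [AddCircle.volume_closedBall]
  exact ENNReal.ofReal_le_ofReal (min_le_right _ _)

instance : IsProbabilityMeasure (volume : Measure UnitAddCircle) :=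
  ⟨by rw [AddCircle.measure_univ]; norm_num⟩

lemma core_integral (q : ℕ) (hq : 0 < q) (c : ℕ → UnitAddCircle) (w : ℕ → ℝ)
    (hw : ∀ r, 0 ≤ w r) (hsum : ∑ r ∈ Finset.range q, w r ≤ 1/3) :
    1 / (36 * (q:ℝ)) ≤
      ∫ y, infDist y (⋃ r ∈ Finset.range q, closedBall (c r) (w r)) ∂volume := by
  set U : Set UnitAddCircle := ⋃ r ∈ Finset.range q, closedBall (c r) (w r) with hUdef
  have hq' : (0:ℝ) < q := by exact_mod_cast hq
  set L : ℝ := 2 * ∑ r ∈ Finset.range q, w r with hLdef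
  have hL0 : 0 ≤ L := by
    rw [hLdef]
    have := Finset.sum_nonneg (fun r (_ : r ∈ Finset.range q) => hw r)
    linarith
  have hL : L ≤ 2/3 := by rw [hLdef]; linarith
  set s₀ : ℝ := (1 - L) / (2 * q) with hs₀def
  have hs₀ : 0 < s₀ := by apply div_pos <;> [linarith; positivity]
  set f : UnitAddCircle → ℝ := fun y => infDist y U with hfdef
  have hfc : Continuous f := continuous_infDist_pt U
  have hfnn : ∀ y, 0 ≤ f y := fun y => infDist_nonneg
  have hUne : U.Nonempty := ⟨c 0, mem_biUnion (Finset.mem_range.2 hq) (mem_closedBall_self (hw 0))⟩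
  have hUclosed : IsClosed U :=
    Set.Finite.isClosed_biUnion (Finset.range q).finite_toSet
      (fun i _ => isClosed_closedBall)
  have hUcompact : IsCompact U := hUclosed.isCompact
  have hfle : ∀ y, f y ≤ 1/2 := by
    intro y
    obtain ⟨u, hu⟩ := hUne
    calc f y ≤ dist y u := infDist_le_dist_of_mem hu
    _ ≤ 1/2 := by rw [dist_eq_norm]; exact norm_le_half _
  have hInt : Integrable f volume := by
    refine Integrable.mono' (integrable_const (1/2 : ℝ)) hfc.aestronglyMeasurable ?_
    exact ae_of_all _ fun y => by rw [Real.norm_eq_abs, abs_of_nonneg (hfnn y)]; exact hfle y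
  rw [hInt.integral_eq_integral_meas_lt (ae_of_all _ hfnn)]
  -- measure upper bound for sublevel sets
  have hmeas_le : ∀ t : ℝ, 0 < t → volume {a : UnitAddCircle | f a ≤ t} ≤
      ENNReal.ofReal (L + 2 * q * t) := by
    intro t ht
    have hsub : {a : UnitAddCircle | f a ≤ t} ⊆
        ⋃ r ∈ Finset.range q, closedBall (c r) (w r + t) := by
      intro y hy
      obtain ⟨u, huU, hud⟩ := hUcompact.exists_infDist_eq_dist hUne y
      obtain ⟨r, hr, hur⟩ := mem_iUnion₂.1 (hUdef ▸ huU)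
      refine mem_iUnion₂.2 ⟨r, hr, ?_⟩
      have : dist y (c r) ≤ dist y u + dist u (c r) := dist_triangle _ _ _
      have h1 : dist y u ≤ t := by rw [← hud]; exact hy
      have h2 : dist u (c r) ≤ w r := hur
      simp only [mem_closedBall]
      linarith
    calc volume {a : UnitAddCircle | f a ≤ t} ≤
        volume (⋃ r ∈ Finset.range q, closedBall (c r) (w r + t)) := measure_mono hsub
      _ ≤ ∑ r ∈ Finset.range q, volume (closedBall (c r) (w r + t)) :=
          measure_biUnion_finset_le _ _
      _ ≤ ∑ r ∈ Finset.range q, ENNReal.ofReal (2 * (w r + t)) :=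
          Finset.sum_le_sum fun r _ => vol_closedBall_le _ _
      _ = ENNReal.ofReal (∑ r ∈ Finset.range q, 2 * (w r + t)) := by
          rw [ENNReal.ofReal_sum_of_nonneg]
          intro r _; have := hw r; positivity
      _ = ENNReal.ofReal (L + 2 * q * t) := by
          congr 1
          rw [hLdef]
          rw [Finset.sum_congr rfl (fun r _ => mul_add 2 (w r) t), Finset.sum_add_distrib,
            Finset.sum_const, ← Finset.mul_sum]
          simp [Finset.card_range]
          ring
  set g : ℝ → ℝ := fun t => (volume {a : UnitAddCircle | t < f a}).toReal with hgdef
  have hganti : Antitone g := by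
    intro t₁ t₂ h
    apply ENNReal.toReal_mono (measure_ne_top _ _)
    exact measure_mono (fun a ha => lt_of_le_of_lt h ha)
  have hgnn : ∀ t, 0 ≤ g t := fun t => ENNReal.toReal_nonneg
  have hgle1 : ∀ t, g t ≤ 1 := by
    intro t
    have : volume {a : UnitAddCircle | t < f a} ≤ 1 := prob_le_one
    exact ENNReal.toReal_le_of_le_ofReal zero_le_one (by simpa using this)
  have hgzero : ∀ t, 1/2 ≤ t → g t = 0 := by
    intro t ht
    have : {a : UnitAddCircle | t < f a} = ∅ := by
      ext a; simp only [mem_setOf_eq, mem_empty_iff_false, iff_false, not_lt]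
      exact (hfle a).trans ht
    simp [hgdef, this]
  have hgIntIoi : IntegrableOn g (Ioi 0) volume := by
    have hdom : Integrable (Set.indicator (Ioc (0:ℝ) (1/2)) (fun _ => (1:ℝ)))
        (volume.restrict (Ioi (0:ℝ))) :=
      ((integrable_indicator_iff measurableSet_Ioc).2
        (integrableOn_const measure_Ioc_lt_top.ne (by simp))).integrableOn
    refine Integrable.mono' hdom (hganti.measurable.aestronglyMeasurable) ?_
    refine (ae_restrict_iff' measurableSet_Ioi).2 (ae_of_all _ fun t ht => ?_)
    rw [Real.norm_eq_abs, abs_of_nonneg (hgnn t)]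
    rcases le_or_gt t (1/2) with h | h
    · have : t ∈ Ioc (0:ℝ) (1/2) := ⟨ht, h⟩
      rw [indicator_of_mem this]
      exact hgle1 t
    · rw [indicator_of_notMem (fun hm => absurd hm.2 (not_le.2 h))]
      rw [hgzero t h.le]
  -- pointwise lower bound on (0, s₀]
  have hgbound : ∀ t ∈ Ioc (0:ℝ) s₀, 1 - L - 2 * q * t ≤ g t := by
    intro t ht
    have hmeasset : MeasurableSet {a : UnitAddCircle | f a ≤ t} :=
      (isClosed_le hfc continuous_const).measurableSet
    have hcompl : {a : UnitAddCircle | t < f a} = {a : UnitAddCircle | f a ≤ t}ᶜ := by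
      ext a; simp [not_le]
    have h1 : volume {a : UnitAddCircle | t < f a} =
        1 - volume {a : UnitAddCircle | f a ≤ t} := by
      rw [hcompl, measure_compl hmeasset (measure_ne_top _ _), measure_univ]
    have h2 : (volume {a : UnitAddCircle | f a ≤ t}).toReal ≤ L + 2 * q * t := by
      apply ENNReal.toReal_le_of_le_ofReal
      · have := ht.1; positivity
      · exact hmeas_le t ht.1
    have h3 : g t = 1 - (volume {a : UnitAddCircle | f a ≤ t}).toReal := by
      rw [hgdef]
      simp only
      rw [h1, ENNReal.toReal_sub_of_le (prob_le_one) (by simp)]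
      simp
    rw [h3]
    linarith
  calc 1 / (36 * (q:ℝ)) ≤ (1 - L) * s₀ - q * s₀^2 := by
        rw [hs₀def]
        rw [div_le_iff₀ (by positivity : (0:ℝ) < 36 * q)]
        have h13 : (1:ℝ)/3 ≤ 1 - L := by linarith
        have key : (1 - L) * ((1 - L) / (2 * q)) - q * ((1 - L) / (2 * q))^2
            = (1-L)^2 / (4*q) := by field_simp; ring
        rw [key]
        rw [div_mul_eq_mul_div, le_div_iff₀ (by positivity : (0:ℝ) < 4*q)]
        nlinarith [sq_nonneg (1 - L - 1/3)]
    _ = ∫ t in Ioc (0:ℝ) s₀, (1 - L - 2 * q * t) := by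
        rw [← intervalIntegral.integral_of_le hs₀.le]
        rw [intervalIntegral.integral_sub intervalIntegrable_const
          ((intervalIntegral.intervalIntegrable_id (μ := volume) (a := 0) (b := s₀)).const_mul (2*q))]
        rw [intervalIntegral.integral_const_mul, integral_id, intervalIntegral.integral_const]
        simp only [smul_eq_mul]
        ring
    _ ≤ ∫ t in Ioc (0:ℝ) s₀, g t := by
        apply setIntegral_mono_on
        · exact (continuous_const.sub (continuous_const.mul continuous_id)).integrableOn_Ioc
        · exact hgIntIoi.mono_set Ioc_subset_Ioi_self
        · exact measurableSet_Ioc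
        · exact hgbound
    _ ≤ ∫ t in Ioi (0:ℝ), g t := by
        apply setIntegral_mono_set hgIntIoi (ae_of_all _ hgnn)
        exact HasSubset.Subset.eventuallyLE Ioc_subset_Ioi_self

lemma cover_lemma (α : ℝ) (q : ℕ) (hq : 0 < q) (K : ℤ) (hK0 : 0 ≤ K)
    (hKθ : (K : ℝ) * |(q : ℝ) * α - round ((q : ℝ) * α)| ≤ 1/3) :
    ∃ (c : ℕ → UnitAddCircle) (w : ℕ → ℝ), (∀ r, 0 ≤ w r) ∧
      (∑ r ∈ Finset.range q, w r ≤ 1/3) ∧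
      ({x : UnitAddCircle | ∃ j : ℤ, |j| ≤ K ∧ x = (((j : ℝ) * α : ℝ) : UnitAddCircle)} ⊆
        ⋃ r ∈ Finset.range q, closedBall (c r) (w r)) := by
  classical
  set p : ℤ := round ((q : ℝ) * α) with hpdef
  set θ : ℝ := (q : ℝ) * α - p with hθdef
  have hqz : (q : ℤ) ≠ 0 := by exact_mod_cast hq.ne'
  have hqzpos : (0 : ℤ) < (q : ℤ) := by exact_mod_cast hq
  set F : ℕ → Finset ℤ := fun r => (Finset.Icc (-K) K).filter (fun j => (j % (q:ℤ)).toNat = r)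
    with hFdef
  set M : ℕ → Finset ℤ := fun r => (F r).image (fun j => j / (q:ℤ)) with hMdef
  set a : ℕ → ℤ := fun r => if h : (M r).Nonempty then (M r).min' h else 0 with hadef
  set b : ℕ → ℤ := fun r => if h : (M r).Nonempty then (M r).max' h else 0 with hbdef
  have hab : ∀ r, a r ≤ b r := by
    intro r
    by_cases h : (M r).Nonempty
    · simp only [hadef, hbdef, dif_pos h]
      exact Finset.min'_le _ _ (Finset.max'_mem _ _)
    · simp [hadef, hbdef, dif_neg h]
  -- basic facts about members of F r
  have hFmem : ∀ r, r < q → ∀ j ∈ F r, j % (q:ℤ) = (r:ℤ) ∧ -K ≤ j ∧ j ≤ K := by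
    intro r hr j hj
    rw [hFdef, Finset.mem_filter, Finset.mem_Icc] at hj
    refine ⟨?_, hj.1.1, hj.1.2⟩
    have h0 : 0 ≤ j % (q:ℤ) := Int.emod_nonneg j hqz
    omega
  -- members of M r give elements of F r
  have hMrev : ∀ r, r < q → ∀ m ∈ M r, (q:ℤ) * m + (r:ℤ) ∈ F r ∧
      -K ≤ (q:ℤ) * m + (r:ℤ) ∧ (q:ℤ) * m + (r:ℤ) ≤ K := by
    intro r hr m hm
    rw [hMdef, Finset.mem_image] at hm
    obtain ⟨j, hj, hjm⟩ := hm
    obtain ⟨hmod, hjl, hjr⟩ := hFmem r hr j hj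
    have : (q:ℤ) * (j / (q:ℤ)) + j % (q:ℤ) = j := Int.mul_ediv_add_emod j (q:ℤ)
    have hjeq : (q:ℤ) * m + (r:ℤ) = j := by rw [← hjm, ← hmod] at *; omega
    rw [hjeq]
    exact ⟨hj, hjl, hjr⟩
  -- Icc (a r) (b r) ⊆ M r for nonempty M r
  have hIccM : ∀ r, r < q → (M r).Nonempty → ∀ m ∈ Finset.Icc (a r) (b r), m ∈ M r := by
    intro r hr h m hm
    rw [Finset.mem_Icc] at hm
    have ha' : a r ∈ M r := by rw [hadef]; simp only [dif_pos h]; exact Finset.min'_mem _ _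
    have hb' : b r ∈ M r := by rw [hbdef]; simp only [dif_pos h]; exact Finset.max'_mem _ _
    obtain ⟨_, hal, _⟩ := hMrev r hr _ ha'
    obtain ⟨_, _, hbr⟩ := hMrev r hr _ hb'
    have hrnn : (0:ℤ) ≤ (r:ℤ) := Int.natCast_nonneg r
    have hrlt : (r:ℤ) < (q:ℤ) := by exact_mod_cast hr
    -- j' := q*m + r is in F r and j'/q = m
    have hjl : -K ≤ (q:ℤ) * m + (r:ℤ) := le_trans hal (by nlinarith [hm.1])
    have hjr : (q:ℤ) * m + (r:ℤ) ≤ K := le_trans (by nlinarith [hm.2]) hbr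
    have hmod : ((q:ℤ) * m + (r:ℤ)) % (q:ℤ) = (r:ℤ) := by
      rw [add_comm, Int.add_mul_emod_self_left]
      exact Int.emod_eq_of_lt hrnn hrlt
    have hdiv : ((q:ℤ) * m + (r:ℤ)) / (q:ℤ) = m := by
      rw [add_comm, mul_comm, Int.add_mul_ediv_right _ _ hqz,
        Int.ediv_eq_zero_of_lt hrnn hrlt, zero_add]
    have hmemF : (q:ℤ) * m + (r:ℤ) ∈ F r := by
      rw [hFdef]
      simp only [Finset.mem_filter, Finset.mem_Icc]
      exact ⟨⟨hjl, hjr⟩, by rw [hmod]; simp⟩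
    rw [hMdef, Finset.mem_image]
    exact ⟨_, hmemF, hdiv⟩
  -- sum bound
  have hsumZ : ∑ r ∈ Finset.range q, (b r - a r) ≤ 2 * K := by
    have hcard : ∀ r, r < q → (M r).Nonempty → b r - a r + 1 ≤ (F r).card := by
      intro r hr h
      have h1 : Finset.Icc (a r) (b r) ⊆ M r := fun m hm => hIccM r hr h m hm
      have h2 : (Finset.Icc (a r) (b r)).card ≤ (M r).card := Finset.card_le_card h1
      have h3 : (M r).card ≤ (F r).card := Finset.card_image_le
      have h4 : (Finset.Icc (a r) (b r)).card = (b r + 1 - a r).toNat := Int.card_Icc _ _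
      have h5 : ((b r + 1 - a r).toNat : ℤ) = b r + 1 - a r :=
        Int.toNat_of_nonneg (by linarith [hab r])
      have := h2.trans h3
      omega
    have hfib : ∑ r ∈ Finset.range q, (F r).card = (Finset.Icc (-K) K).card := by
      rw [hFdef]
      exact (Finset.card_eq_sum_card_fiberwise (fun j hj => by
        rw [Finset.mem_coe, Finset.mem_range]
        have h0 : 0 ≤ j % (q:ℤ) := Int.emod_nonneg j hqz
        have h1 : j % (q:ℤ) < (q:ℤ) := Int.emod_lt_of_pos j hqzpos
        omega)).symm
    have hIccCard : ((Finset.Icc (-K) K).card : ℤ) = 2 * K + 1 := by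
      rw [Int.card_Icc]
      omega
    set N := (Finset.range q).filter (fun r => (M r).Nonempty) with hNdef
    have hsum_eq : ∑ r ∈ Finset.range q, (b r - a r) = ∑ r ∈ N, (b r - a r) := by
      symm
      apply Finset.sum_subset (Finset.filter_subset _ _)
      intro r hrmem hrN
      have : ¬ (M r).Nonempty := fun h => hrN (Finset.mem_filter.2 ⟨hrmem, h⟩)
      simp [hadef, hbdef, dif_neg this]
    have hcardN : 1 ≤ N.card := by
      have h0F : (0:ℤ) ∈ F 0 := by
        rw [hFdef]
        simp only [Finset.mem_filter, Finset.mem_Icc]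
        refine ⟨⟨by omega, by omega⟩, by simp⟩
      have h0M : (M 0).Nonempty := ⟨0 / (q:ℤ), by rw [hMdef]; exact Finset.mem_image_of_mem _ h0F⟩
      have : (0:ℕ) ∈ N := by
        rw [hNdef, Finset.mem_filter]
        exact ⟨Finset.mem_range.2 hq, h0M⟩
      exact Finset.card_pos.2 ⟨0, this⟩
    have hNsum : ∑ r ∈ N, ((F r).card : ℤ) ≤ ∑ r ∈ Finset.range q, ((F r).card : ℤ) :=
      Finset.sum_le_sum_of_subset_of_nonneg (Finset.filter_subset _ _)
        (fun r _ _ => Int.natCast_nonneg _)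
    have hstep : ∑ r ∈ N, (b r - a r) ≤ ∑ r ∈ N, (((F r).card : ℤ) - 1) := by
      apply Finset.sum_le_sum
      intro r hr
      rw [hNdef, Finset.mem_filter, Finset.mem_range] at hr
      have := hcard r hr.1 hr.2
      omega
    have htot : ∑ r ∈ Finset.range q, ((F r).card : ℤ) = 2 * K + 1 := by
      rw [← hIccCard, ← hfib]
      push_cast
      rfl
    rw [hsum_eq]
    calc ∑ r ∈ N, (b r - a r) ≤ ∑ r ∈ N, (((F r).card : ℤ) - 1) := hstep
      _ = ∑ r ∈ N, ((F r).card : ℤ) - N.card := by rw [Finset.sum_sub_distrib]; simp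
      _ ≤ (2 * K + 1) - 1 := by
          have := hNsum.trans_eq htot
          omega
      _ = 2 * K := by ring
  -- define centers and widths
  refine ⟨fun r => ((((r:ℝ) * α + ((a r + b r : ℤ) : ℝ)/2 * θ : ℝ)) : UnitAddCircle),
    fun r => ((b r - a r : ℤ) : ℝ)/2 * |θ|, ?_, ?_, ?_⟩
  · intro r
    have := hab r
    have : (0:ℝ) ≤ ((b r - a r : ℤ) : ℝ) := by exact_mod_cast by omega
    positivity
  · have : ∑ r ∈ Finset.range q, ((b r - a r : ℤ) : ℝ)/2 * |θ|
        = (((∑ r ∈ Finset.range q, (b r - a r) : ℤ) : ℝ)) / 2 * |θ| := by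
      rw [← Finset.sum_mul, ← Finset.sum_div]
      push_cast
      ring_nf
    rw [this]
    have h2K : (((∑ r ∈ Finset.range q, (b r - a r) : ℤ) : ℝ)) ≤ 2 * (K:ℝ) := by
      exact_mod_cast hsumZ
    have habs : 0 ≤ |θ| := abs_nonneg θ
    calc (((∑ r ∈ Finset.range q, (b r - a r) : ℤ) : ℝ)) / 2 * |θ|
        ≤ (2 * (K:ℝ)) / 2 * |θ| := by
          apply mul_le_mul_of_nonneg_right _ habs
          linarith
      _ = (K:ℝ) * |θ| := by ring
      _ ≤ 1/3 := hKθ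
  · rintro x ⟨j, hjK, rfl⟩
    rw [abs_le] at hjK
    set r : ℕ := (j % (q:ℤ)).toNat with hrdef
    have h0 : 0 ≤ j % (q:ℤ) := Int.emod_nonneg j hqz
    have h1 : j % (q:ℤ) < (q:ℤ) := Int.emod_lt_of_pos j hqzpos
    have hrq : r < q := by omega
    have hjF : j ∈ F r := by
      rw [hFdef]
      simp only [Finset.mem_filter, Finset.mem_Icc]
      exact ⟨⟨hjK.1, hjK.2⟩, hrdef.symm⟩
    set m : ℤ := j / (q:ℤ) with hmdef
    have hmM : m ∈ M r := by rw [hMdef]; exact Finset.mem_image_of_mem _ hjF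
    have hMne : (M r).Nonempty := ⟨m, hmM⟩
    have ham : a r ≤ m := by rw [hadef]; simp only [dif_pos hMne]; exact Finset.min'_le _ _ hmM
    have hmb : m ≤ b r := by rw [hbdef]; simp only [dif_pos hMne]; exact Finset.le_max' _ _ hmM
    refine mem_iUnion₂.2 ⟨r, Finset.mem_range.2 hrq, ?_⟩
    rw [mem_closedBall]
    -- rewrite the point
    have hrz : ((r:ℤ):ℝ) = ((j % (q:ℤ) : ℤ) : ℝ) := by
      rw [hrdef]; exact_mod_cast congrArg (Int.cast (R := ℝ)) (Int.toNat_of_nonneg h0)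
    have hjqm : (q:ℤ) * m + j % (q:ℤ) = j := Int.mul_ediv_add_emod j (q:ℤ)
    have hptR : ((j:ℝ) * α) = ((r:ℝ) * α + (m:ℝ) * θ) + ((m * p : ℤ) : ℝ) := by
      have hj : (j:ℝ) = (q:ℝ) * (m:ℝ) + ((j % (q:ℤ) : ℤ) : ℝ) := by exact_mod_cast hjqm.symm
      have hrr : ((r:ℕ):ℝ) = ((j % (q:ℤ) : ℤ) : ℝ) := by
        rw [← hrz]; norm_cast
      rw [hj, hrr, hθdef]
      push_cast
      ring
    have hpt : (((j : ℝ) * α : ℝ) : UnitAddCircle)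
        = ((((r:ℝ) * α + (m:ℝ) * θ : ℝ)) : UnitAddCircle) := by
      rw [hptR]; exact coe_add_int _ _
    rw [hpt]
    refine le_trans (dist_coe_le _ _) ?_
    have heq : ((r:ℝ) * α + (m:ℝ) * θ) - ((r:ℝ) * α + ((a r + b r : ℤ) : ℝ)/2 * θ)
        = ((m:ℝ) - ((a r + b r : ℤ) : ℝ)/2) * θ := by ring
    rw [heq, abs_mul]
    apply mul_le_mul_of_nonneg_right _ (abs_nonneg θ)
    have h1 : ((a r : ℤ):ℝ) ≤ ((m:ℤ):ℝ) := by exact_mod_cast ham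
    have h2 : ((m:ℤ):ℝ) ≤ ((b r : ℤ):ℝ) := by exact_mod_cast hmb
    rw [abs_le]
    push_cast at h1 h2 ⊢
    constructor <;> linarith

end Helpers

theorem wasserstein_lower_bound_orbit_support (α : ℝ) (hα : Irrational α)
    (γ C : ℝ) (hγ : 1 ≤ γ) (hC : 0 < C)
    (q : ℕ) (hq : 0 < q) (happrox : torusNorm ((q : ℝ) * α) ≤ C * (q : ℝ) ^ (-γ))
    (ν : Measure UnitAddCircle) [IsProbabilityMeasure ν]
    (hsupp : ν ({x : UnitAddCircle | ∃ j : ℤ, |j| ≤ ⌊(q : ℝ) ^ γ / (3 * C)⌋ ∧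
      x = (((j : ℝ) * α : ℝ) : UnitAddCircle)}ᶜ) = 0) :
    1 / (36 * (q : ℝ)) ≤ wassersteinDist 1 ν volume := by
  classical
  set K : ℤ := ⌊(q : ℝ) ^ γ / (3 * C)⌋ with hKdef
  have hq' : (0:ℝ) < q := by exact_mod_cast hq
  have hqγ : (0:ℝ) < (q:ℝ) ^ γ := Real.rpow_pos_of_pos hq' γ
  have hK0 : 0 ≤ K := Int.floor_nonneg.2 (by positivity)
  have habsθ : |(q:ℝ) * α - round ((q:ℝ) * α)| ≤ C * (q:ℝ) ^ (-γ) := by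
    have h := happrox
    rw [torusNorm, UnitAddCircle.norm_eq] at h
    exact h
  have hKθ : (K : ℝ) * |(q : ℝ) * α - round ((q : ℝ) * α)| ≤ 1/3 := by
    have h1 : (K:ℝ) ≤ (q:ℝ) ^ γ / (3 * C) := Int.floor_le _
    have h2 : C * (q:ℝ) ^ (-γ) = C / (q:ℝ) ^ γ := by
      rw [Real.rpow_neg hq'.le]; ring
    calc (K : ℝ) * |(q : ℝ) * α - round ((q : ℝ) * α)|
        ≤ ((q:ℝ) ^ γ / (3 * C)) * (C * (q:ℝ) ^ (-γ)) :=
          mul_le_mul h1 habsθ (abs_nonneg _) (by positivity)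
      _ = 1/3 := by rw [h2]; field_simp
  obtain ⟨c, w, hw, hsumw, hcover⟩ := cover_lemma α q hq K hK0 hKθ
  have hcore := core_integral q hq c w hw hsumw
  set U : Set UnitAddCircle := ⋃ r ∈ Finset.range q, Metric.closedBall (c r) (w r) with hUdef
  set A : Set UnitAddCircle := {x : UnitAddCircle | ∃ j : ℤ, |j| ≤ K ∧
      x = (((j : ℝ) * α : ℝ) : UnitAddCircle)} with hAdef
  have hAfin : A.Finite := by
    apply Set.Finite.subset
      ((Set.finite_Icc (-K) K).image (fun j : ℤ => (((j : ℝ) * α : ℝ) : UnitAddCircle)))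
    rintro x ⟨j, hj, rfl⟩
    exact ⟨j, Set.mem_Icc.2 (abs_le.1 hj), rfl⟩
  have hAmeas : MeasurableSet A := hAfin.measurableSet
  have hUne : U.Nonempty :=
    ⟨c 0, Set.mem_biUnion (Finset.mem_range.2 hq) (Metric.mem_closedBall_self (hw 0))⟩
  obtain ⟨u₀, hu₀⟩ := hUne
  rw [wassersteinDist]
  apply le_csInf
  · refine ⟨_, ⟨ν.prod volume, ⟨?_, ?_⟩, rfl⟩⟩
    · simp [Measure.map_fst_prod]
    · simp [Measure.map_snd_prod]
  · rintro x ⟨Pc, ⟨hPc1, hPc2⟩, rfl⟩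
    haveI hPcprob : IsProbabilityMeasure Pc := by
      constructor
      have h : Pc.map Prod.fst Set.univ = 1 := by rw [hPc1]; exact measure_univ
      rwa [Measure.map_apply measurable_fst MeasurableSet.univ, Set.preimage_univ] at h
    simp only [one_div_one, Real.rpow_one]
    have hintdist : Integrable (fun z : UnitAddCircle × UnitAddCircle => dist z.1 z.2) Pc := by
      refine Integrable.mono' (integrable_const 1) continuous_dist.aestronglyMeasurable
        (ae_of_all _ fun z => ?_)
      rw [Real.norm_eq_abs, abs_of_nonneg dist_nonneg]
      calc dist z.1 z.2 ≤ 1/2 := by rw [dist_eq_norm]; exact norm_le_half _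
        _ ≤ 1 := by norm_num
    have hintf : Integrable (fun z : UnitAddCircle × UnitAddCircle =>
        Metric.infDist z.2 U) Pc := by
      refine Integrable.mono'  (integrable_const 1)
        ((Metric.continuous_infDist_pt U).comp continuous_snd).aestronglyMeasurable
        (ae_of_all _ fun z => ?_)
      rw [Real.norm_eq_abs, abs_of_nonneg Metric.infDist_nonneg]
      calc Metric.infDist z.2 U ≤ dist z.2 u₀ := Metric.infDist_le_dist_of_mem hu₀
        _ ≤ 1/2 := by rw [dist_eq_norm]; exact norm_le_half _
        _ ≤ 1 := by norm_num
    have hae : ∀ᵐ z ∂Pc, Metric.infDist z.2 U ≤ dist z.1 z.2 := by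
      have hnull : Pc (Prod.fst ⁻¹' Aᶜ) = 0 := by
        rw [← Measure.map_apply measurable_fst hAmeas.compl, hPc1]
        exact hsupp
      rw [ae_iff]
      apply measure_mono_null _ hnull
      intro z hz
      simp only [Set.mem_setOf_eq, not_le] at hz
      simp only [Set.mem_preimage, Set.mem_compl_iff]
      intro hzA
      have hzU : z.1 ∈ U := hcover hzA
      have : Metric.infDist z.2 U ≤ dist z.1 z.2 := by
        rw [dist_comm]
        exact Metric.infDist_le_dist_of_mem hzU
      exact absurd hz (not_lt.2 this)
    calc 1 / (36 * (q:ℝ)) ≤ ∫ y, Metric.infDist y U ∂volume := hcore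
      _ = ∫ z : UnitAddCircle × UnitAddCircle, Metric.infDist z.2 U ∂Pc := by
          rw [← hPc2, integral_map measurable_snd.aemeasurable
            (Metric.continuous_infDist_pt U).aestronglyMeasurable]
      _ ≤ ∫ z : UnitAddCircle × UnitAddCircle, dist z.1 z.2 ∂Pc :=
          integral_mono_ae hintf hintdist hae

end
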